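/- Let M and N be persistence vector spaces over ℝⁿ (functors from (ℝⁿ, ⪯) to vector spaces over a field 𝔽). If M and N are ε-interleaved and L is a line parameterized by u = s·m⃗ + b with m* = min_i m_i > 0, then the restrictions M_L and N_L (persistence vector spaces over ℝ given by (M_L)_s = M_{s·m⃗+b}) are (ε/m*)-interleaved. -/

import Mathlib

open scoped ENNReal

universe u v

/-- An `n`-dimensional persistence vector space over the field `F`:
a family of `F`-vector spaces indexed by `ℝⁿ` (with the componentwise order)
together with functorial transition maps. -/
structure PersMod (n : ℕ) (F : Type u) [Field F] : Type (max (v + 1) u) where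
  space : (Fin n → ℝ) → Type v
  [isAddCommGroup : ∀ p, AddCommGroup (space p)]
  [isModule : ∀ p, Module F (space p)]
  trans : ∀ p q : Fin n → ℝ, p ≤ q → space p →ₗ[F] space q
  trans_self : ∀ (p : Fin n → ℝ) (h : p ≤ p), trans p p h = LinearMap.id
  trans_comp : ∀ (p q r : Fin n → ℝ) (hpq : p ≤ q) (hqr : q ≤ r),
    (trans q r hqr).comp (trans p q hpq) = trans p r (le_trans hpq hqr)

attribute [instance] PersMod.isAddCommGroup PersMod.isModule

/-- A 1-dimensional persistence vector space over `F`, indexed by `ℝ`. -/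
structure PersMod1 (F : Type u) [Field F] : Type (max (v + 1) u) where
  space : ℝ → Type v
  [isAddCommGroup : ∀ s, AddCommGroup (space s)]
  [isModule : ∀ s, Module F (space s)]
  trans : ∀ s t : ℝ, s ≤ t → space s →ₗ[F] space t
  trans_self : ∀ (s : ℝ) (h : s ≤ s), trans s s h = LinearMap.id
  trans_comp : ∀ (s t r : ℝ) (hst : s ≤ t) (htr : t ≤ r),
    (trans t r htr).comp (trans s t hst) = trans s r (le_trans hst htr)

attribute [instance] PersMod1.isAddCommGroup PersMod1.isModule

variable {n : ℕ} {F : Type u} [Field F]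

lemma shift_mono {p q : Fin n → ℝ} (ε : ℝ) (h : p ≤ q) :
    (p + fun _ => ε) ≤ (q + fun _ => ε) := by
  intro i
  simpa using h i

lemma le_shift2 {p : Fin n → ℝ} {ε : ℝ} (hε : 0 ≤ ε) :
    p ≤ (p + fun _ => ε) + fun _ => ε := by
  intro i
  show p i ≤ p i + ε + ε
  linarith

/-- An `ε`-interleaving between two `n`-dimensional persistence vector spaces. -/
structure Interleaving {n : ℕ} {F : Type u} [Field F] (M N : PersMod n F) (ε : ℝ) where
  hε : 0 ≤ ε
  α : ∀ p, M.space p →ₗ[F] N.space (p + fun _ => ε)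
  β : ∀ p, N.space p →ₗ[F] M.space (p + fun _ => ε)
  α_nat : ∀ p q (h : p ≤ q),
    (α q).comp (M.trans p q h) = (N.trans _ _ (shift_mono ε h)).comp (α p)
  β_nat : ∀ p q (h : p ≤ q),
    (β q).comp (N.trans p q h) = (M.trans _ _ (shift_mono ε h)).comp (β p)
  βα : ∀ p, (β (p + fun _ => ε)).comp (α p) =
    M.trans p ((p + fun _ => ε) + fun _ => ε) (le_shift2 hε)
  αβ : ∀ p, (α (p + fun _ => ε)).comp (β p) =
    N.trans p ((p + fun _ => ε) + fun _ => ε) (le_shift2 hε)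

/-- An `ε`-interleaving between two 1-dimensional persistence vector spaces. -/
structure Interleaving1 {F : Type u} [Field F] (M N : PersMod1 F) (ε : ℝ) where
  hε : 0 ≤ ε
  α : ∀ s, M.space s →ₗ[F] N.space (s + ε)
  β : ∀ s, N.space s →ₗ[F] M.space (s + ε)
  α_nat : ∀ s t (h : s ≤ t),
    (α t).comp (M.trans s t h) = (N.trans (s + ε) (t + ε) (by linarith)).comp (α s)
  β_nat : ∀ s t (h : s ≤ t),
    (β t).comp (N.trans s t h) = (M.trans (s + ε) (t + ε) (by linarith)).comp (β s)
  βα : ∀ s, (β (s + ε)).comp (α s) = M.trans s (s + ε + ε) (by linarith)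
  αβ : ∀ s, (α (s + ε)).comp (β s) = N.trans s (s + ε + ε) (by linarith)

/-- The interleaving distance on `n`-dimensional persistence vector spaces. -/
noncomputable def dI (M N : PersMod n F) : ℝ≥0∞ :=
  sInf {x : ℝ≥0∞ | ∃ ε : ℝ, 0 ≤ ε ∧ x = ENNReal.ofReal ε ∧ Nonempty (Interleaving M N ε)}

/-- The interleaving distance on 1-dimensional persistence vector spaces. -/
noncomputable def dI1 (M N : PersMod1.{u, v} F) : ℝ≥0∞ :=
  sInf {x : ℝ≥0∞ | ∃ ε : ℝ, 0 ≤ ε ∧ x = ENNReal.ofReal ε ∧ Nonempty (Interleaving1 M N ε)}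

lemma line_mono (m b : Fin n → ℝ) (hm : ∀ i, 0 ≤ m i) {s t : ℝ} (h : s ≤ t) :
    s • m + b ≤ t • m + b := by
  intro i
  simp only [Pi.add_apply, Pi.smul_apply, smul_eq_mul]
  nlinarith [hm i]

/-- The restriction `M_L` of a persistence vector space `M` to the line
`L : u = s • m + b` (with positive direction vector `m`). -/
noncomputable def PersMod.restrict (M : PersMod n F) (m b : Fin n → ℝ)
    (hm : ∀ i, 0 < m i) : PersMod1.{u, v} F where
  space s := M.space (s • m + b)
  trans s t h := M.trans _ _ (line_mono m b (fun i => (hm i).le) h)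
  trans_self _ _ := M.trans_self _ _
  trans_comp _ _ _ _ _ := M.trans_comp _ _ _ _ _

lemma key_le (m b : Fin n → ℝ) (hm : ∀ i, 0 < m i) (ι : Fin n) (hι : ∀ i, m ι ≤ m i)
    {ε : ℝ} (hε : 0 ≤ ε) (s : ℝ) :
    (s • m + b) + (fun _ => ε) ≤ (s + ε / m ι) • m + b := by
  intro i
  simp only [Pi.add_apply, Pi.smul_apply, smul_eq_mul]
  have h1 : ε / m ι * m ι = ε := div_mul_cancel₀ ε (hm ι).ne'
  have h2 : 0 ≤ ε / m ι := div_nonneg hε (hm ι).le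
  nlinarith [hι i]

lemma key_le' (m b : Fin n → ℝ) (hm : ∀ i, 0 < m i) (ι : Fin n) (hι : ∀ i, m ι ≤ m i)
    {ε : ℝ} (hε : 0 ≤ ε) (s : ℝ) :
    s • m + b ≤ ((s + ε / m ι) • m + b) - fun _ => ε := by
  intro i
  simp only [Pi.sub_apply, Pi.add_apply, Pi.smul_apply, smul_eq_mul]
  have h1 : ε / m ι * m ι = ε := div_mul_cancel₀ ε (hm ι).ne'
  have h2 : 0 ≤ ε / m ι := div_nonneg hε (hm ι).le
  nlinarith [hι i]

lemma shift_cancel (p : Fin n → ℝ) (ε : ℝ) : (p - fun _ => ε) + (fun _ => ε) = p := by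
  funext i
  simp

lemma trans_app_trans (M : PersMod n F) {p q r : Fin n → ℝ} (h1 : p ≤ q) (h2 : q ≤ r)
    (x : M.space p) :
    M.trans q r h2 (M.trans p q h1 x) = M.trans p r (le_trans h1 h2) x := by
  rw [← M.trans_comp p q r h1 h2]; rfl

/-- If `M` and `N` are `ε`-interleaved persistence vector spaces over `ℝⁿ` and `L` is the
line `u = s • m + b` with `m* = m ι = min_i m i > 0`, then the restrictions `M_L` and `N_L`
are `(ε / m*)`-interleaved. -/
theorem stmt_3 (M N : PersMod n F) (ε : ℝ)
    (hMN : Nonempty (Interleaving M N ε))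
    (m b : Fin n → ℝ) (hm : ∀ i, 0 < m i) (ι : Fin n) (hι : ∀ i, m ι ≤ m i) :
    Nonempty (Interleaving1 (M.restrict m b hm) (N.restrict m b hm) (ε / m ι)) := by
  obtain ⟨I⟩ := hMN
  have hε : 0 ≤ ε := I.hε
  have hε' : 0 ≤ ε / m ι := div_nonneg hε (hm ι).le
  refine ⟨{ hε := hε',
            α := fun s => (N.trans _ _ (key_le m b hm ι hι hε s)).comp (I.α (s • m + b)),
            β := fun s => (M.trans _ _ (key_le m b hm ι hι hε s)).comp (I.β (s • m + b)),
            α_nat := ?_, β_nat := ?_, βα := ?_, αβ := ?_ }⟩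
  · intro s t h
    refine LinearMap.ext fun (x : M.space (s • m + b)) => ?_
    show N.trans _ _ (key_le m b hm ι hι hε t) (I.α (t • m + b) (M.trans _ _ (line_mono m b (fun i => (hm i).le) h) x)) =
      N.trans _ _ (line_mono m b (fun i => (hm i).le) (by linarith : s + ε / m ι ≤ t + ε / m ι))
        (N.trans _ _ (key_le m b hm ι hι hε s) (I.α (s • m + b) x))
    have h1 := LinearMap.congr_fun (I.α_nat (s • m + b) (t • m + b)
      (line_mono m b (fun i => (hm i).le) h)) x
    simp only [LinearMap.comp_apply] at h1
    rw [h1]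
    rw [trans_app_trans, trans_app_trans]
  · intro s t h
    refine LinearMap.ext fun (x : N.space (s • m + b)) => ?_
    show M.trans _ _ (key_le m b hm ι hι hε t) (I.β (t • m + b) (N.trans _ _ (line_mono m b (fun i => (hm i).le) h) x)) =
      M.trans _ _ (line_mono m b (fun i => (hm i).le) (by linarith : s + ε / m ι ≤ t + ε / m ι))
        (M.trans _ _ (key_le m b hm ι hι hε s) (I.β (s • m + b) x))
    have h1 := LinearMap.congr_fun (I.β_nat (s • m + b) (t • m + b)
      (line_mono m b (fun i => (hm i).le) h)) x
    simp only [LinearMap.comp_apply] at h1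
    rw [h1]
    rw [trans_app_trans, trans_app_trans]
  · intro s
    refine LinearMap.ext fun (x : M.space (s • m + b)) => ?_
    show M.trans _ _ (key_le m b hm ι hι hε (s + ε / m ι)) (I.β ((s + ε / m ι) • m + b)
        (N.trans _ _ (key_le m b hm ι hι hε s) (I.α (s • m + b) x))) =
      M.trans _ _ (line_mono m b (fun i => (hm i).le) (by linarith : s ≤ s + ε / m ι + ε / m ι)) x
    have h1 := LinearMap.congr_fun (I.β_nat ((s • m + b) + fun _ => ε) ((s + ε / m ι) • m + b)
      (key_le m b hm ι hι hε s)) (I.α (s • m + b) x)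
    have h2 := LinearMap.congr_fun (I.βα (s • m + b)) x
    simp only [LinearMap.comp_apply] at h1 h2
    rw [h1, h2]
    rw [trans_app_trans, trans_app_trans]
  · intro s
    refine LinearMap.ext fun (x : N.space (s • m + b)) => ?_
    show N.trans _ _ (key_le m b hm ι hι hε (s + ε / m ι)) (I.α ((s + ε / m ι) • m + b)
        (M.trans _ _ (key_le m b hm ι hι hε s) (I.β (s • m + b) x))) =
      N.trans _ _ (line_mono m b (fun i => (hm i).le) (by linarith : s ≤ s + ε / m ι + ε / m ι)) x
    have h1 := LinearMap.congr_fun (I.α_nat ((s • m + b) + fun _ => ε) ((s + ε / m ι) • m + b)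
      (key_le m b hm ι hι hε s)) (I.β (s • m + b) x)
    have h2 := LinearMap.congr_fun (I.αβ (s • m + b)) x
    simp only [LinearMap.comp_apply] at h1 h2
    rw [h1, h2]
    rw [trans_app_trans, trans_app_trans]
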